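/- Let α, β : ℤ → ℕ be finitely supported with α ≠ β, and let m = m(α−β) be the decreasing rearrangement (by absolute value) of the multiset consisting of each nonzero integer j repeated |α_j − β_j| times, with entries m₁, m₂, m₃, .... Let n̂ = n̂(α+β) be the decreasing rearrangement of the multiset where each integer h > 1 is repeated (α_h+β_h)+(α_{−h}+β_{−h}) times and 1 is repeated (α_1+β_1)+(α_{−1}+β_{−1})+(α_0+β_0) times. Then for any θ ∈ (0,1), Σ_{i ≠ m₁, m₂} ⟨i⟩^θ |α_i − β_i| ≤ Σ_{l ≥ 3} n̂_l^θ. -/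

import Mathlib

open Set Real

/-- Multiset of indices of ℓ = α − β: each integer j repeated |α_j − β_j| times. -/
noncomputable def ellMultiset (α β : ℤ →₀ ℕ) : Multiset ℤ :=
  (α.support ∪ β.support).val.bind fun j =>
    Multiset.replicate ((α j : ℤ) - (β j : ℤ)).natAbs j

/-- m(α−β): decreasing rearrangement (by absolute value) of the nonzero indices of
α−β with multiplicity |α_j − β_j|, recorded through their absolute values. -/
noncomputable def mList (α β : ℤ →₀ ℕ) : List ℕ :=
  ((((ellMultiset α β).filter (· ≠ (0:ℤ))).map Int.natAbs).sort (· ≤ ·)).reverse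

/-- n̂(v): decreasing rearrangement of the multiset where each h > 1 is repeated
v_h + v_{−h} times and 1 is repeated v_1 + v_{−1} + v_0 times; equivalently each
index j contributes v_j copies of max(1,|j|). -/
noncomputable def nList (v : ℤ →₀ ℕ) : List ℕ :=
  (((Finsupp.toMultiset v).map (fun j : ℤ => max 1 j.natAbs)).sort (· ≤ ·)).reverse

/-- decreasing sort of a multiset of naturals -/
noncomputable def dsortAux (S : Multiset ℕ) : List ℕ := (S.sort (· ≤ ·)).reverse

lemma dsortAux_coe (S : Multiset ℕ) : ((dsortAux S : List ℕ) : Multiset ℕ) = S := by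
  rw [dsortAux, Multiset.coe_reverse, Multiset.sort_eq]

lemma dsortAux_sorted (S : Multiset ℕ) : (dsortAux S).Pairwise (· ≥ ·) := by
  rw [dsortAux, List.pairwise_reverse]
  exact Multiset.pairwise_sort (s := S) (r := (· ≤ ·))

lemma dsortAux_eq_cons (S : Multiset ℕ) (m : ℕ) (hm : m ∈ S) (hmax : ∀ x ∈ S, x ≤ m) :
    dsortAux S = m :: dsortAux (S.erase m) := by
  have hperm : (dsortAux S).Perm (m :: dsortAux (S.erase m)) := by
    rw [← Multiset.coe_eq_coe, dsortAux_coe, ← Multiset.cons_coe, dsortAux_coe,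
      Multiset.cons_erase hm]
  refine List.Perm.eq_of_pairwise' (dsortAux_sorted S) ?_ hperm
  rw [List.pairwise_cons]
  refine ⟨fun b hb => ?_, dsortAux_sorted _⟩
  have : b ∈ S.erase m := by
    rw [← dsortAux_coe (S.erase m)]; exact_mod_cast hb
  exact hmax b (Multiset.mem_of_mem_erase this)

lemma exists_dsortAux_cons (S : Multiset ℕ) (hS : S ≠ 0) :
    ∃ m, m ∈ S ∧ (∀ x ∈ S, x ≤ m) ∧ dsortAux S = m :: dsortAux (S.erase m) := by
  rcases h : dsortAux S with _ | ⟨a, t⟩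
  · exact absurd (by rw [← dsortAux_coe S, h]; rfl) hS
  · have hsorted : ((a :: t : List ℕ)).Pairwise (· ≥ ·) := h ▸ dsortAux_sorted S
    have hamem : a ∈ S := by
      rw [← dsortAux_coe S, h]
      exact Multiset.mem_coe.mpr (List.mem_cons_self (a := a) (l := t))
    have hmax : ∀ x ∈ S, x ≤ a := by
      intro x hx
      rw [← dsortAux_coe S, h, Multiset.mem_coe] at hx
      rcases List.mem_cons.mp hx with rfl | h'
      · exact le_refl x
      · exact List.rel_of_pairwise_cons hsorted h'
    exact ⟨a, hamem, hmax, h.symm.trans (dsortAux_eq_cons S a hamem hmax)⟩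

lemma count_erase_ge (a b : ℕ) (s : Multiset ℕ) :
    s.count a - 1 ≤ (s.erase b).count a := by
  by_cases hab : a = b
  · subst hab; rw [Multiset.count_erase_self]
  · rw [Multiset.count_erase_of_ne hab]; omega

lemma erase2_le (M N : Multiset ℕ) (hMN : M ≤ N)
    (m1 m2 n1 n2 : ℕ)
    (hm1 : m1 ∈ M) (hm2 : m2 ∈ M.erase m1)
    (hn1 : n1 ∈ N) (hn2 : n2 ∈ N.erase n1)
    (hm1max : ∀ x ∈ M, x ≤ m1) (hm2max : ∀ x ∈ M.erase m1, x ≤ m2)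
    (hn1max : ∀ x ∈ N, x ≤ n1) (hn2max : ∀ x ∈ N.erase n1, x ≤ n2) :
    (M.erase m1).erase m2 ≤ (N.erase n1).erase n2 := by
  classical
  have hm2m1 : m2 ≤ m1 := hm1max _ (Multiset.mem_of_mem_erase hm2)
  have hm1n1 : m1 ≤ n1 := hn1max _ (Multiset.mem_of_le hMN hm1)
  -- m2 ≤ n2
  have hm2n2 : m2 ≤ n2 := by
    have hMeq : M = m1 ::ₘ m2 ::ₘ (M.erase m1).erase m2 := by
      rw [Multiset.cons_erase hm2, Multiset.cons_erase hm1]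
    have hcM : 2 ≤ Multiset.countP (fun x => m2 ≤ x) M := by
      rw [hMeq, Multiset.countP_cons, Multiset.countP_cons]
      simp [hm2m1]
    have hcN : 2 ≤ Multiset.countP (fun x => m2 ≤ x) N :=
      le_trans hcM (Multiset.countP_le_of_le _ hMN)
    have hNeq : N = n1 ::ₘ N.erase n1 := (Multiset.cons_erase hn1).symm
    have h' : Multiset.countP (fun x => m2 ≤ x) N
        = Multiset.countP (fun x => m2 ≤ x) (N.erase n1) + if m2 ≤ n1 then 1 else 0 := by
      conv_lhs => rw [hNeq]
      rw [Multiset.countP_cons]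
    rw [h'] at hcN
    have hcNe : 0 < Multiset.countP (fun x => m2 ≤ x) (N.erase n1) := by
      split at hcN <;> omega
    obtain ⟨x, hx, hxm⟩ := Multiset.countP_pos.mp hcNe
    exact le_trans hxm (hn2max x hx)
  rw [Multiset.le_iff_count]
  intro v
  rcases lt_trichotomy v m2 with hv | hv | hv
  · -- v < m2 : counts untouched
    have h1 : v ≠ m1 := by omega
    have h2 : v ≠ m2 := by omega
    have h3 : v ≠ n1 := by omega
    have h4 : v ≠ n2 := by omega
    rw [Multiset.count_erase_of_ne h2, Multiset.count_erase_of_ne h1,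
      Multiset.count_erase_of_ne h4, Multiset.count_erase_of_ne h3]
    exact Multiset.count_le_of_le v hMN
  · -- v = m2
    subst hv
    have hMle : Multiset.count v M ≤ Multiset.count v N := Multiset.count_le_of_le v hMN
    have hE : Multiset.count v ((M.erase m1).erase v) = Multiset.count v (M.erase m1) - 1 :=
      Multiset.count_erase_self v (M.erase m1)
    have hN2' : Multiset.count v (N.erase n1) - 1 ≤ Multiset.count v ((N.erase n1).erase n2) :=
      count_erase_ge v n2 (N.erase n1)
    have hN1' : Multiset.count v N - 1 ≤ Multiset.count v (N.erase n1) :=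
      count_erase_ge v n1 N
    by_cases hvm1 : v = m1
    · subst hvm1
      have hE2 : Multiset.count v (M.erase v) = Multiset.count v M - 1 :=
        Multiset.count_erase_self v M
      omega
    · have hE2 : Multiset.count v (M.erase m1) = Multiset.count v M :=
        Multiset.count_erase_of_ne hvm1 M
      have h3 : v ≠ n1 := by omega
      have hN1 : Multiset.count v (N.erase n1) = Multiset.count v N :=
        Multiset.count_erase_of_ne h3 N
      omega
  · -- m2 < v : count in E is 0
    have : v ∉ (M.erase m1).erase m2 := by
      intro hmem
      have := hm2max v (Multiset.mem_of_mem_erase hmem)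
      omega
    rw [Multiset.count_eq_zero_of_notMem this]
    exact Nat.zero_le _

/-- Σ_{i ≠ m₁,m₂} ⟨i⟩^θ |α_i − β_i| ≤ Σ_{l ≥ 3} n̂_l^θ: the sum over all indices,
minus the two largest entries ⟨m₁⟩^θ, ⟨m₂⟩^θ of m(α−β), is bounded by the sum of
n̂_l^θ for l ≥ 3. -/
theorem stmt13 (θ : ℝ) (hθ : θ ∈ Set.Ioo (0:ℝ) 1) (α β : ℤ →₀ ℕ) (hne : α ≠ β)
    (hlen : 2 ≤ (mList α β).length) :
    (∑ᶠ i : ℤ, (max 1 |(i:ℝ)|) ^ θ * |(α i : ℝ) - (β i : ℝ)|)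
        - (((mList α β).take 2).map (fun a : ℕ => (a:ℝ) ^ θ)).sum
      ≤ (((nList (α + β)).drop 2).map (fun a : ℕ => (a:ℝ) ^ θ)).sum := by
  classical
  set g : ℕ → ℝ := fun a => (a:ℝ) ^ θ with hgdef
  have hg0 : ∀ a : ℕ, 0 ≤ g a := fun a => Real.rpow_nonneg (Nat.cast_nonneg a) θ
  set maxf : ℤ → ℕ := fun j => max 1 j.natAbs with hmaxf
  set ell : Multiset ℤ := ellMultiset α β with hell
  set M : Multiset ℕ := ell.map maxf with hM
  set N : Multiset ℕ := (Finsupp.toMultiset (α + β)).map maxf with hN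
  set mMS : Multiset ℕ := (ell.filter (· ≠ (0:ℤ))).map Int.natAbs with hmMSdef
  have hmList : mList α β = dsortAux mMS := rfl
  have hnList : nList (α + β) = dsortAux N := rfl
  -- split M = mMS + Z where Z is all ones
  set Z : Multiset ℕ := (ell.filter (fun j => ¬ j ≠ (0:ℤ))).map maxf with hZdef
  have hZ1 : ∀ x ∈ Z, x = 1 := by
    intro x hx
    rw [hZdef] at hx
    obtain ⟨j, hj, rfl⟩ := Multiset.mem_map.mp hx
    have : j = 0 := by simpa using (Multiset.mem_filter.mp hj).2
    subst this
    simp [hmaxf]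
  have hMsplit : M = mMS + Z := by
    rw [hM, hmMSdef, hZdef]
    conv_lhs => rw [← Multiset.filter_add_not (fun j => j ≠ (0:ℤ)) ell]
    rw [Multiset.map_add]
    congr 1
    apply Multiset.map_congr rfl
    intro j hj
    have hj0 : j ≠ 0 := (Multiset.mem_filter.mp hj).2
    have : 1 ≤ j.natAbs := Int.natAbs_pos.mpr hj0
    simp [hmaxf, max_eq_right this]
  -- card facts
  have hcardm : (mList α β).length = Multiset.card mMS := by
    rw [hmList, dsortAux, List.length_reverse, Multiset.length_sort]
  have hcardmMS : 2 ≤ Multiset.card mMS := hcardm ▸ hlen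
  -- two largest of mMS
  obtain ⟨m1, hm1mem, hm1max', hd1⟩ := exists_dsortAux_cons mMS (by
    intro h; rw [h] at hcardmMS; simp at hcardmMS)
  have hcard1 : 1 ≤ Multiset.card (mMS.erase m1) := by
    rw [Multiset.card_erase_of_mem hm1mem, Nat.pred_eq_sub_one]; omega
  obtain ⟨m2, hm2mem, hm2max', hd2⟩ := exists_dsortAux_cons (mMS.erase m1) (by
    intro h; rw [h] at hcard1; simp at hcard1)
  -- entries of mMS are ≥ 1
  have hge1 : ∀ x ∈ mMS, 1 ≤ x := by
    intro x hx
    rw [hmMSdef] at hx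
    obtain ⟨j, hj, rfl⟩ := Multiset.mem_map.mp hx
    exact Int.natAbs_pos.mpr (Multiset.mem_filter.mp hj).2
  have h1m1 : 1 ≤ m1 := hge1 m1 hm1mem
  have h1m2 : 1 ≤ m2 := hge1 m2 (Multiset.mem_of_mem_erase hm2mem)
  -- lift to M
  have hm1M : m1 ∈ M := by rw [hMsplit]; exact Multiset.mem_add.mpr (Or.inl hm1mem)
  have hMerase : M.erase m1 = mMS.erase m1 + Z := by
    rw [hMsplit, Multiset.erase_add_left_pos Z hm1mem]
  have hm2M : m2 ∈ M.erase m1 := by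
    rw [hMerase]; exact Multiset.mem_add.mpr (Or.inl hm2mem)
  have hm1maxM : ∀ x ∈ M, x ≤ m1 := by
    intro x hx
    rw [hMsplit] at hx
    rcases Multiset.mem_add.mp hx with h | h
    · exact hm1max' x h
    · rw [hZ1 x h]; exact h1m1
  have hm2maxM : ∀ x ∈ M.erase m1, x ≤ m2 := by
    intro x hx
    rw [hMerase] at hx
    rcases Multiset.mem_add.mp hx with h | h
    · exact hm2max' x h
    · rw [hZ1 x h]; exact h1m2
  set E : Multiset ℕ := (M.erase m1).erase m2 with hEdef
  have hMeq : M = m1 ::ₘ m2 ::ₘ E := by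
    rw [hEdef, Multiset.cons_erase hm2M, Multiset.cons_erase hm1M]
  -- M ≤ N
  have hellle : ell ≤ Finsupp.toMultiset (α + β) := by
    rw [Multiset.le_iff_count]
    intro a
    rw [Finsupp.count_toMultiset]
    rw [hell, ellMultiset, Multiset.count_bind]
    have hrw : ((α.support ∪ β.support).val.map
        (fun b => Multiset.count a (Multiset.replicate ((α b : ℤ) - (β b : ℤ)).natAbs b))).sum
        = ∑ b ∈ (α.support ∪ β.support), if b = a then ((α b : ℤ) - (β b : ℤ)).natAbs else 0 := by
      rw [Finset.sum]
      congr 1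
      apply Multiset.map_congr rfl
      intro b _
      rw [Multiset.count_replicate]
    rw [hrw]
    have : ∑ b ∈ (α.support ∪ β.support), (if b = a then ((α b : ℤ) - (β b : ℤ)).natAbs else 0)
        = if a ∈ (α.support ∪ β.support) then ((α a : ℤ) - (β a : ℤ)).natAbs else 0 := by
      rw [Finset.sum_ite_eq' (α.support ∪ β.support) a (fun b => ((α b : ℤ) - (β b : ℤ)).natAbs)]
    rw [this]
    have hab : (α + β) a = α a + β a := Finsupp.add_apply α β a
    split
    · rw [hab]; omega
    · exact Nat.zero_le _
  have hMN : M ≤ N := by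
    rw [hM, hN]; exact Multiset.map_le_map hellle
  -- two largest of N
  have hcardN : 2 ≤ Multiset.card N := by
    have h1 : Multiset.card M ≤ Multiset.card N := Multiset.card_le_card hMN
    have h2 : Multiset.card mMS ≤ Multiset.card M := by
      rw [hMsplit, Multiset.card_add]; omega
    omega
  obtain ⟨n1, hn1mem, hn1max, hdn1⟩ := exists_dsortAux_cons N (by
    intro h; rw [h] at hcardN; simp at hcardN)
  have hcardN1 : 1 ≤ Multiset.card (N.erase n1) := by
    rw [Multiset.card_erase_of_mem hn1mem, Nat.pred_eq_sub_one]; omega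
  obtain ⟨n2, hn2mem, hn2max, hdn2⟩ := exists_dsortAux_cons (N.erase n1) (by
    intro h; rw [h] at hcardN1; simp at hcardN1)
  set N2 : Multiset ℕ := (N.erase n1).erase n2 with hN2def
  -- key comparison
  have hEN2 : E ≤ N2 :=
    erase2_le M N hMN m1 m2 n1 n2 hm1M hm2M hn1mem hn2mem hm1maxM hm2maxM hn1max hn2max
  -- rewrite the finsum as a sum over M
  have hFsum : (∑ᶠ i : ℤ, (max 1 |(i:ℝ)|) ^ θ * |(α i : ℝ) - (β i : ℝ)|)
      = (M.map g).sum := by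
    have hsupp : (Function.support fun i : ℤ => (max 1 |(i:ℝ)|) ^ θ * |(α i : ℝ) - (β i : ℝ)|)
        ⊆ ↑(α.support ∪ β.support) := by
      intro i hi
      by_contra hmem
      simp only [Finset.coe_union, Set.mem_union, Finset.mem_coe,
        Finsupp.mem_support_iff, not_or, not_not] at hmem
      apply hi
      simp [hmem.1, hmem.2]
    rw [finsum_eq_finset_sum_of_support_subset _ hsupp]
    rw [hM, hell, ellMultiset, Multiset.map_bind, Multiset.map_bind, Multiset.sum_bind]
    rw [Finset.sum]
    congr 1
    apply Multiset.map_congr rfl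
    intro j _
    rw [Multiset.map_replicate, Multiset.map_replicate, Multiset.sum_replicate, nsmul_eq_mul]
    have h1 : (max 1 |(j:ℝ)|) = ((maxf j : ℕ) : ℝ) := by
      simp only [hmaxf]
      push_cast [Nat.cast_natAbs]
      simp
    have h2 : |(α j : ℝ) - (β j : ℝ)| = ((((α j : ℤ) - (β j : ℤ)).natAbs : ℕ) : ℝ) := by
      push_cast [Nat.cast_natAbs]
      simp
    simp only [hgdef]
    rw [h1, h2]
    ring
  rw [hFsum]
  -- rewrite take 2 of mList
  have hmtake : mList α β = m1 :: m2 :: dsortAux ((mMS.erase m1).erase m2) := by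
    rw [hmList, hd1, hd2]
  rw [hmtake]
  simp only [List.take, List.map_cons, List.map_nil, List.sum_cons, List.sum_nil]
  -- rewrite M sum
  have hMsum : (M.map g).sum = g m1 + (g m2 + (E.map g).sum) := by
    rw [hMeq, Multiset.map_cons, Multiset.map_cons, Multiset.sum_cons, Multiset.sum_cons]
  rw [hMsum]
  -- rewrite nList drop 2
  have hndrop : (nList (α + β)).drop 2 = dsortAux N2 := by
    rw [hnList, hdn1, hdn2, hN2def]
    rfl
  rw [hndrop]
  have hNsum : ((dsortAux N2).map g).sum = (N2.map g).sum := by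
    rw [← dsortAux_coe N2, Multiset.map_coe, Multiset.sum_coe, dsortAux_coe]
  rw [hNsum]
  -- final inequality
  obtain ⟨D, hD⟩ := Multiset.le_iff_exists_add.mp hEN2
  rw [hD, Multiset.map_add, Multiset.sum_add]
  have hDnn : 0 ≤ (D.map g).sum := by
    apply Multiset.sum_nonneg
    intro x hx
    obtain ⟨a, _, rfl⟩ := Multiset.mem_map.mp hx
    exact hg0 a
  have : 0 ≤ (E.map g).sum + (D.map g).sum - (E.map g).sum := by linarith
  linarith
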